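/- For X, Y ∈ B(H) and T = diag(X, Y) on H ⊕ H, ‖T‖_α ≤ √( max{‖X‖_α², ‖Y‖_α²} + α·w(X)·w(Y) ). -/

import Mathlib

open scoped Matrix

/-- The `α`-norm of a bounded operator `T`:
`‖T‖_α = sup {√(α|⟨Tx,x⟩|² + (1-α)‖Tx‖²) : ‖x‖ = 1}`. -/
noncomputable def alphaNorm {H : Type*} [NormedAddCommGroup H] [InnerProductSpace ℂ H]
    (α : ℝ) (T : H →L[ℂ] H) : ℝ :=
  sSup {r : ℝ | ∃ x : H, ‖x‖ = 1 ∧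
    r = Real.sqrt (α * ‖(inner ℂ (T x) x : ℂ)‖ ^ 2 + (1 - α) * ‖T x‖ ^ 2)}

/-- The numerical radius `w(T) = sup {|⟨Tx,x⟩| : ‖x‖ = 1}`. -/
noncomputable def numRadius {H : Type*} [NormedAddCommGroup H] [InnerProductSpace ℂ H]
    (T : H →L[ℂ] H) : ℝ :=
  sSup {r : ℝ | ∃ x : H, ‖x‖ = 1 ∧ r = ‖(inner ℂ (T x) x : ℂ)‖}

variable {H : Type*} [NormedAddCommGroup H] [InnerProductSpace ℂ H]

/-- The canonical inclusion `H × H → H ⊕₂ H`. -/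
noncomputable def pr (x y : H) : WithLp 2 (H × H) := (WithLp.equiv 2 (H × H)).symm (x, y)


lemma aux_bdd (α : ℝ) (hα0 : 0 ≤ α) (hα1 : α ≤ 1) (X : H →L[ℂ] H) :
    BddAbove {r : ℝ | ∃ x : H, ‖x‖ = 1 ∧
      r = Real.sqrt (α * ‖(inner ℂ (X x) x : ℂ)‖ ^ 2 + (1 - α) * ‖X x‖ ^ 2)} := by
  refine ⟨‖X‖, ?_⟩
  rintro r ⟨x, hx, rfl⟩
  have h1 : ‖(inner ℂ (X x) x : ℂ)‖ ≤ ‖X‖ := by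
    calc ‖(inner ℂ (X x) x : ℂ)‖ ≤ ‖X x‖ * ‖x‖ := norm_inner_le_norm _ _
    _ ≤ ‖X‖ * ‖x‖ * ‖x‖ := by nlinarith [X.le_opNorm x, norm_nonneg x]
    _ = ‖X‖ := by rw [hx]; ring
  have h2 : ‖X x‖ ≤ ‖X‖ := by simpa [hx] using X.le_opNorm x
  have h3 : α * ‖(inner ℂ (X x) x : ℂ)‖ ^ 2 + (1 - α) * ‖X x‖ ^ 2 ≤ ‖X‖ ^ 2 := by
    have e1 : ‖(inner ℂ (X x) x : ℂ)‖ ^ 2 ≤ ‖X‖ ^ 2 :=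
      pow_le_pow_left₀ (norm_nonneg _) h1 2
    have e2 : ‖X x‖ ^ 2 ≤ ‖X‖ ^ 2 := pow_le_pow_left₀ (norm_nonneg _) h2 2
    nlinarith
  calc Real.sqrt (α * ‖(inner ℂ (X x) x : ℂ)‖ ^ 2 + (1 - α) * ‖X x‖ ^ 2)
      ≤ Real.sqrt (‖X‖ ^ 2) := Real.sqrt_le_sqrt h3
    _ = ‖X‖ := Real.sqrt_sq (norm_nonneg X)

lemma aux_bdd_nr (X : H →L[ℂ] H) :
    BddAbove {r : ℝ | ∃ x : H, ‖x‖ = 1 ∧ r = ‖(inner ℂ (X x) x : ℂ)‖} := by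
  refine ⟨‖X‖, ?_⟩
  rintro r ⟨x, hx, rfl⟩
  calc ‖(inner ℂ (X x) x : ℂ)‖ ≤ ‖X x‖ * ‖x‖ := norm_inner_le_norm _ _
  _ ≤ ‖X‖ * ‖x‖ * ‖x‖ := by nlinarith [X.le_opNorm x, norm_nonneg x]
  _ = ‖X‖ := by rw [hx]; ring

lemma inner_le_nr (X : H →L[ℂ] H) (x : H) :
    ‖(inner ℂ (X x) x : ℂ)‖ ≤ ‖x‖ ^ 2 * numRadius X := by
  rcases eq_or_ne x 0 with rfl | hx
  · simp
  · set a : ℝ := ‖x‖ with ha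
    have ha0 : 0 < a := norm_pos_iff.mpr hx
    set u : H := ((a : ℂ))⁻¹ • x with hu
    have hu1 : ‖u‖ = 1 := by
      rw [hu, norm_smul, norm_inv, Complex.norm_real, Real.norm_of_nonneg ha0.le,
        inv_mul_cancel₀ ha0.ne']
    have hxu : x = (a : ℂ) • u := by
      rw [hu, smul_smul, mul_inv_cancel₀ (by exact_mod_cast ha0.ne' : (a:ℂ) ≠ 0), one_smul]
    have hX : X x = (a : ℂ) • X u := by rw [hxu, map_smul]
    have hin : (inner ℂ (X x) x : ℂ) = (a : ℂ) ^ 2 * inner ℂ (X u) u := by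
      rw [hX, hxu, inner_smul_left, inner_smul_right]
      simp [Complex.conj_ofReal]; ring
    have hle : ‖(inner ℂ (X u) u : ℂ)‖ ≤ numRadius X :=
      le_csSup (aux_bdd_nr X) ⟨u, hu1, rfl⟩
    rw [hin]
    rw [norm_mul]
    have : ‖((a : ℂ)) ^ 2‖ = a ^ 2 := by
      rw [norm_pow, Complex.norm_real, Real.norm_of_nonneg ha0.le]
    rw [this]
    nlinarith [norm_nonneg (inner ℂ (X u) u : ℂ)]

lemma quad_le (α : ℝ) (hα0 : 0 ≤ α) (hα1 : α ≤ 1) (X : H →L[ℂ] H) (x : H) (hx1 : ‖x‖ ≤ 1) :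
    α * ‖(inner ℂ (X x) x : ℂ)‖ ^ 2 + (1 - α) * ‖X x‖ ^ 2 ≤ ‖x‖ ^ 2 * alphaNorm α X ^ 2 := by
  rcases eq_or_ne x 0 with rfl | hx
  · simp
  · set a : ℝ := ‖x‖ with ha
    have ha0 : 0 < a := norm_pos_iff.mpr hx
    set u : H := ((a : ℂ))⁻¹ • x with hu
    have hu1 : ‖u‖ = 1 := by
      rw [hu, norm_smul, norm_inv, Complex.norm_real, Real.norm_of_nonneg ha0.le,
        inv_mul_cancel₀ ha0.ne']
    have hxu : x = (a : ℂ) • u := by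
      rw [hu, smul_smul, mul_inv_cancel₀ (by exact_mod_cast ha0.ne' : (a:ℂ) ≠ 0), one_smul]
    have hX : X x = (a : ℂ) • X u := by rw [hxu, map_smul]
    have hin : ‖(inner ℂ (X x) x : ℂ)‖ = a ^ 2 * ‖(inner ℂ (X u) u : ℂ)‖ := by
      have : (inner ℂ (X x) x : ℂ) = (a : ℂ) ^ 2 * inner ℂ (X u) u := by
        rw [hX, hxu, inner_smul_left, inner_smul_right]
        simp [Complex.conj_ofReal]; ring
      rw [this, norm_mul, norm_pow, Complex.norm_real, Real.norm_of_nonneg ha0.le]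
    have hnX : ‖X x‖ = a * ‖X u‖ := by
      rw [hX, norm_smul, Complex.norm_real, Real.norm_of_nonneg ha0.le]
    have key : α * ‖(inner ℂ (X u) u : ℂ)‖ ^ 2 + (1 - α) * ‖X u‖ ^ 2 ≤ alphaNorm α X ^ 2 := by
      have hnn : 0 ≤ α * ‖(inner ℂ (X u) u : ℂ)‖ ^ 2 + (1 - α) * ‖X u‖ ^ 2 :=
        add_nonneg (mul_nonneg hα0 (sq_nonneg _)) (mul_nonneg (by linarith) (sq_nonneg _))
      have hle : Real.sqrt (α * ‖(inner ℂ (X u) u : ℂ)‖ ^ 2 + (1 - α) * ‖X u‖ ^ 2)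
          ≤ alphaNorm α X := le_csSup (aux_bdd α hα0 hα1 X) ⟨u, hu1, rfl⟩
      calc α * ‖(inner ℂ (X u) u : ℂ)‖ ^ 2 + (1 - α) * ‖X u‖ ^ 2
          = Real.sqrt (α * ‖(inner ℂ (X u) u : ℂ)‖ ^ 2 + (1 - α) * ‖X u‖ ^ 2) ^ 2 :=
            (Real.sq_sqrt hnn).symm
        _ ≤ alphaNorm α X ^ 2 := by
            have h0 := Real.sqrt_nonneg (α * ‖(inner ℂ (X u) u : ℂ)‖ ^ 2 + (1 - α) * ‖X u‖ ^ 2)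
            nlinarith
    rw [hin, hnX]
    have ha1 : a ≤ 1 := hx1
    have h4 : a ^ 2 * (α * ‖(inner ℂ (X u) u : ℂ)‖ ^ 2 + (1 - α) * ‖X u‖ ^ 2)
        ≤ a ^ 2 * alphaNorm α X ^ 2 := mul_le_mul_of_nonneg_left key (sq_nonneg a)
    have h6 : 0 ≤ α * ‖(inner ℂ (X u) u : ℂ)‖ ^ 2 * (a ^ 2 * (1 - a ^ 2)) := by
      have : (0:ℝ) ≤ 1 - a ^ 2 := by nlinarith
      positivity
    nlinarith

lemma numRadius_nonneg (X : H →L[ℂ] H) : 0 ≤ numRadius X :=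
  Real.sSup_nonneg (by rintro r ⟨x, hx, rfl⟩; exact norm_nonneg _)

set_option maxHeartbeats 1000000 in
/-- `‖diag(X, Y)‖_α ≤ √(max{‖X‖_α², ‖Y‖_α²} + α w(X) w(Y))`. -/
theorem alphaNorm_diag_mixed (α : ℝ) (hα0 : 0 ≤ α) (hα1 : α ≤ 1) (X Y : H →L[ℂ] H)
    (T : WithLp 2 (H × H) →L[ℂ] WithLp 2 (H × H))
    (hT : ∀ x y : H, T (pr x y) = pr (X x) (Y y)) :
    alphaNorm α T ≤
      Real.sqrt (max (alphaNorm α X ^ 2) (alphaNorm α Y ^ 2) + α * numRadius X * numRadius Y) := by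
  apply Real.sSup_le
  · rintro r ⟨z, hz, rfl⟩
    apply Real.sqrt_le_sqrt
    set x := z.fst with hxdef
    set y := z.snd with hydef
    have hTz : T z = pr (X x) (Y y) := hT x y
    have hfst : (T z).fst = X x := by rw [hTz]; exact WithLp.toLp_fst _
    have hsnd : (T z).snd = Y y := by rw [hTz]; exact WithLp.toLp_snd _
    have hinner : (inner ℂ (T z) z : ℂ) = inner ℂ (X x) x + inner ℂ (Y y) y := by
      rw [WithLp.prod_inner_apply, WithLp.ofLp_fst, WithLp.ofLp_snd, WithLp.ofLp_fst, WithLp.ofLp_snd, hfst, hsnd]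
    have hnorm : ‖T z‖ ^ 2 = ‖X x‖ ^ 2 + ‖Y y‖ ^ 2 := by
      rw [WithLp.prod_norm_sq_eq_of_L2, hfst, hsnd]
    have hxy : ‖x‖ ^ 2 + ‖y‖ ^ 2 = 1 := by
      have h := WithLp.prod_norm_sq_eq_of_L2 z
      rw [hz] at h; simpa using h.symm
    have h2ab : 2 * (‖x‖ ^ 2 * ‖y‖ ^ 2) ≤ 1 := by
      have h1 : (‖x‖ ^ 2 + ‖y‖ ^ 2) ^ 2 = 1 := by rw [hxy]; norm_num
      linarith [sq_nonneg (‖x‖ ^ 2), sq_nonneg (‖y‖ ^ 2), sq_nonneg (‖x‖ ^ 2 - ‖y‖ ^ 2), h1]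
    have hx1 : ‖x‖ ≤ 1 := by nlinarith [norm_nonneg x, norm_nonneg y]
    have hy1 : ‖y‖ ≤ 1 := by nlinarith [norm_nonneg x, norm_nonneg y]
    set p := ‖(inner ℂ (X x) x : ℂ)‖ with hp0
    set q := ‖(inner ℂ (Y y) y : ℂ)‖ with hq0
    set wX := numRadius X with hwXd
    set wY := numRadius Y with hwYd
    set NX := alphaNorm α X with hNXd
    set NY := alphaNorm α Y with hNYd
    set M := max (NX ^ 2) (NY ^ 2) with hMd
    have hM1 : NX ^ 2 ≤ M := le_max_left _ _
    have hM2 : NY ^ 2 ≤ M := le_max_right _ _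
    have hwX : 0 ≤ wX := numRadius_nonneg X
    have hwY : 0 ≤ wY := numRadius_nonneg Y
    have hpn : 0 ≤ p := norm_nonneg _
    have hqn : 0 ≤ q := norm_nonneg _
    have hAB := quad_le α hα0 hα1 X x hx1
    have hCD := quad_le α hα0 hα1 Y y hy1
    have hpw := inner_le_nr X x
    have hqw := inner_le_nr Y y
    have htri : ‖(inner ℂ (T z) z : ℂ)‖ ≤ p + q := by
      rw [hinner]; exact norm_add_le _ _
    have ht2 : ‖(inner ℂ (T z) z : ℂ)‖ ^ 2 ≤ (p + q) ^ 2 :=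
      pow_le_pow_left₀ (norm_nonneg _) htri 2
    have A1 : α * ‖(inner ℂ (T z) z : ℂ)‖ ^ 2 ≤ α * (p + q) ^ 2 :=
      mul_le_mul_of_nonneg_left ht2 hα0
    have hpq : p * q ≤ (‖x‖ ^ 2 * wX) * (‖y‖ ^ 2 * wY) :=
      mul_le_mul hpw hqw hqn (by positivity)
    have A4 : α * (p * q) ≤ α * ((‖x‖ ^ 2 * wX) * (‖y‖ ^ 2 * wY)) :=
      mul_le_mul_of_nonneg_left hpq hα0
    have A5 : ‖x‖ ^ 2 * NX ^ 2 ≤ ‖x‖ ^ 2 * M :=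
      mul_le_mul_of_nonneg_left hM1 (sq_nonneg _)
    have A6 : ‖y‖ ^ 2 * NY ^ 2 ≤ ‖y‖ ^ 2 * M :=
      mul_le_mul_of_nonneg_left hM2 (sq_nonneg _)
    have A7 : α * wX * wY * (2 * (‖x‖ ^ 2 * ‖y‖ ^ 2)) ≤ α * wX * wY * 1 :=
      mul_le_mul_of_nonneg_left h2ab (by positivity)
    have hxyM : ‖x‖ ^ 2 * M + ‖y‖ ^ 2 * M = M := by linear_combination M * hxy
    rw [hnorm]
    linarith [A1, hAB, hCD, A4, A5, A6, A7, hxyM]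
  · exact Real.sqrt_nonneg _
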